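/- Let y₀ be the unique real number in (1/√2, 1) satisfying (1 − y₀)e^{4y₀} = 1 + y₀. Define F(x₁, x₂, y) := (x₁ − 1/2)² + (x₁ + x₂)(1 + y) − (1 − y)e^{4y} + (y − y₀)³ and f(x₁, x₂, y) := −(x₁ + x₂)e^{−(y+1)²} − e^{−(y−1)²}. Then (1/2, 1/2, y₀) is not a local minimizer of F over the lower-level stationary set S_FO := {(x₁, x₂, y) ∈ R³ : ∂f/∂y(x₁, x₂, y) = 0}: (1/2, 1/2, y₀) ∈ S_FO with F(1/2, 1/2, y₀) = 0, yet for every ε > 0 there exists (x₁, x₂, y) ∈ S_FO with ‖(x₁, x₂, y) − (1/2, 1/2, y₀)‖ < ε and F(x₁, x₂, y) < 0. Hence the classical first order approach fails at (1/2, 1/2, y₀) for this bilevel program. -/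

import Mathlib

open Set

noncomputable section

/-- The upper-level objective of the modified Mirrlees example. -/
def Fup (y₀ x₁ x₂ y : ℝ) : ℝ :=
  (x₁ - 1/2)^2 + (x₁ + x₂) * (1 + y) - (1 - y) * Real.exp (4*y) + (y - y₀)^3

/-- The lower-level objective of the modified Mirrlees example. -/
def flow (x₁ x₂ y : ℝ) : ℝ :=
  -(x₁ + x₂) * Real.exp (-(y+1)^2) - Real.exp (-(y-1)^2)

lemma flow_deriv (x₁ x₂ y : ℝ) :
    deriv (fun y' => flow x₁ x₂ y') y =
    2*(x₁+x₂)*(y+1)*Real.exp (-(y+1)^2) + 2*(y-1)*Real.exp (-(y-1)^2) := by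
  have h1 : HasDerivAt (fun y' : ℝ => -(y'+1)^2) (-(2*(y+1))) y := by
    refine ((((hasDerivAt_id' y).add_const 1).pow 2).neg).congr_deriv ?_
    norm_num
  have h2 : HasDerivAt (fun y' : ℝ => -(y'-1)^2) (-(2*(y-1))) y := by
    refine ((((hasDerivAt_id' y).sub_const 1).pow 2).neg).congr_deriv ?_
    norm_num
  have h : HasDerivAt (fun y' => flow x₁ x₂ y')
      (-(x₁+x₂) * (Real.exp (-(y+1)^2) * (-(2*(y+1)))) -
        Real.exp (-(y-1)^2) * (-(2*(y-1)))) y := by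
    exact (h1.exp.const_mul (-(x₁+x₂))).sub h2.exp
  rw [h.deriv]; ring

lemma exp_shift (y : ℝ) : Real.exp (4*y) * Real.exp (-(y+1)^2) = Real.exp (-(y-1)^2) := by
  rw [← Real.exp_add]; ring_nf

lemma stat_of_eq (x₁ x₂ y : ℝ) (h : (x₁ + x₂) * (1 + y) = (1 - y) * Real.exp (4*y)) :
    deriv (fun y' => flow x₁ x₂ y') y = 0 := by
  rw [flow_deriv]
  have key : (x₁+x₂)*(y+1)*Real.exp (-(y+1)^2) = (1-y)*Real.exp (-(y-1)^2) := by
    calc (x₁+x₂)*(y+1)*Real.exp (-(y+1)^2)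
        = ((x₁+x₂)*(1+y))*Real.exp (-(y+1)^2) := by ring
      _ = (1-y)*(Real.exp (4*y) * Real.exp (-(y+1)^2)) := by rw [h]; ring
      _ = (1-y)*Real.exp (-(y-1)^2) := by rw [exp_shift]
  nlinarith [key]

/-- the classical first-order approach fails at `(1/2, 1/2, y₀)` for
the modified Mirrlees bilevel program: the point is lower-level stationary with
`F = 0`, but arbitrarily close stationary points have negative upper-level value. -/
theorem stmt19 (y₀ : ℝ) (hy₀ : y₀ ∈ Ioo (1 / Real.sqrt 2) 1)
    (heq : (1 - y₀) * Real.exp (4*y₀) = 1 + y₀)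
    (huniq : ∀ y ∈ Ioo (1 / Real.sqrt 2) 1,
      (1 - y) * Real.exp (4*y) = 1 + y → y = y₀) :
    deriv (fun y' => flow (1/2) (1/2) y') y₀ = 0 ∧
    Fup y₀ (1/2) (1/2) y₀ = 0 ∧
    ∀ ε > 0, ∃ x₁ x₂ y : ℝ, deriv (fun y' => flow x₁ x₂ y') y = 0 ∧
      Real.sqrt ((x₁ - 1/2)^2 + (x₂ - 1/2)^2 + (y - y₀)^2) < ε ∧
      Fup y₀ x₁ x₂ y < 0 := by
  have hy₀pos : 0 < y₀ := lt_trans (by positivity) hy₀.1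
  refine ⟨stat_of_eq _ _ _ (by linarith [heq]), by simp only [Fup]; rw [heq]; ring, ?_⟩
  intro ε hε
  -- the map y ↦ (1-y)e^{4y}/(1+y) is continuous at y₀ with value 1
  set g : ℝ → ℝ := fun y => (1 - y) * Real.exp (4*y) / (1 + y) with hg
  have hg₀ : g y₀ = 1 := by
    rw [hg]
    have h1y₀ : (1:ℝ) + y₀ ≠ 0 := by linarith
    show (1 - y₀) * Real.exp (4*y₀) / (1 + y₀) = 1
    rw [heq]; exact div_self h1y₀
  have hgc : ContinuousAt g y₀ := by
    apply ContinuousAt.div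
    · fun_prop
    · fun_prop
    · linarith
  rw [Metric.continuousAt_iff] at hgc
  obtain ⟨δ, hδpos, hδ⟩ := hgc (ε/2) (by linarith)
  set t : ℝ := min (min δ (ε/2)) y₀ / 2 with ht
  have htpos : 0 < t := by positivity
  have htδ : t < δ := by
    have : min (min δ (ε/2)) y₀ ≤ δ := le_trans (min_le_left _ _) (min_le_left _ _)
    linarith
  have htε : t < ε/2 := by
    have : min (min δ (ε/2)) y₀ ≤ ε/2 := le_trans (min_le_left _ _) (min_le_right _ _)
    linarith
  have hty : t < y₀ := by
    have : min (min δ (ε/2)) y₀ ≤ y₀ := min_le_right _ _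
    linarith
  set y : ℝ := y₀ - t with hy
  have hypos : 0 < y := by simp [hy]; linarith
  refine ⟨1/2, g y - 1/2, y, ?_, ?_, ?_⟩
  · apply stat_of_eq
    have h1y : (1 : ℝ) + y ≠ 0 := by linarith
    rw [show (1:ℝ)/2 + (g y - 1/2) = g y by ring]
    simp only [hg]
    exact div_mul_cancel₀ _ h1y
  · have hdist : dist y y₀ < δ := by
      rw [Real.dist_eq, hy, show y₀ - t - y₀ = -t by ring, abs_neg, abs_of_pos htpos]
      exact htδ
    have hgy : |g y - 1| < ε/2 := by
      have := hδ hdist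
      rwa [Real.dist_eq, hg₀] at this
    have h1 : ((1:ℝ)/2 - 1/2)^2 = 0 := by norm_num
    rw [h1]
    have h2 : (g y - 1/2 - 1/2)^2 < (ε/2)^2 := by
      have : g y - 1/2 - 1/2 = g y - 1 := by ring
      rw [this]
      calc (g y - 1)^2 = |g y - 1|^2 := (sq_abs _).symm
        _ < (ε/2)^2 := by nlinarith [abs_nonneg (g y - 1)]
    have h3 : (y - y₀)^2 < (ε/2)^2 := by
      have : y - y₀ = -t := by rw [hy]; ring
      rw [this]; nlinarith
    have : 0 + (g y - 1/2 - 1/2)^2 + (y - y₀)^2 < ε^2 := by nlinarith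
    calc Real.sqrt (0 + (g y - 1/2 - 1/2)^2 + (y - y₀)^2)
        < Real.sqrt (ε^2) := by
          apply Real.sqrt_lt_sqrt (by positivity) this
      _ = ε := Real.sqrt_sq hε.le
  · have h1y : (1 : ℝ) + y ≠ 0 := by linarith
    have hFeq : Fup y₀ (1/2) (g y - 1/2) y = (y - y₀)^3 := by
      simp only [Fup, hg]
      field_simp
      ring
    rw [hFeq]
    have : y - y₀ = -t := by rw [hy]; ring
    rw [this]
    have h3 := pow_pos htpos 3
    nlinarith [h3]
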